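/- For every n ≥ 2, the least common multiple L of the numbers 1, 2, …, 2^n − 1 is a period of the set S'_n = {a ∈ ℕ : there exists b with 1 < b < 2^n such that b does not divide a}, and every period k ≥ 1 of S'_n is divisible by L; hence L is the smallest period of S'_n. -/

import Mathlib

/-- `p` is a period of `S ⊆ ℕ`. -/
def IsPeriodNat (S : Set ℕ) (p : ℕ) : Prop :=
  ∃ n₀ : ℕ, ∀ a : ℕ, n₀ ≤ a → (a + p ∈ S ↔ a ∈ S)

lemma mem_iff_not_lcm_dvd (n : ℕ) (hn : 2 ≤ n) (a : ℕ) :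
    (∃ b : ℕ, 1 < b ∧ b < 2 ^ n ∧ ¬ b ∣ a) ↔
      ¬ (Finset.Icc 1 (2 ^ n - 1)).lcm id ∣ a := by
  have h4 : 4 ≤ 2 ^ n := by
    calc (4:ℕ) = 2 ^ 2 := rfl
    _ ≤ 2 ^ n := Nat.pow_le_pow_right (by norm_num) hn
  constructor
  · rintro ⟨b, hb1, hb2, hbd⟩ hL
    exact hbd (dvd_trans (Finset.dvd_lcm (f := id)
      (Finset.mem_Icc.mpr ⟨le_of_lt hb1, Nat.le_sub_one_of_lt hb2⟩)) hL)
  · intro hL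
    by_contra h
    push_neg at h
    apply hL
    apply Finset.lcm_dvd
    intro b hb
    rw [Finset.mem_Icc] at hb
    rcases Nat.lt_or_ge 1 b with hb1 | hb1
    · have hb2 : b < 2 ^ n := lt_of_le_of_lt hb.2 (Nat.sub_lt (by omega) one_pos)
      exact h b hb1 hb2
    · have : b = 1 := le_antisymm hb1 hb.1
      simp [this]

lemma lcm_dvd_iff_not_mem (n : ℕ) (hn : 2 ≤ n) (a : ℕ) :
    (Finset.Icc 1 (2 ^ n - 1)).lcm id ∣ a ↔
      a ∉ {a : ℕ | ∃ b : ℕ, 1 < b ∧ b < 2 ^ n ∧ ¬ b ∣ a} := by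
  rw [Set.mem_setOf_eq, mem_iff_not_lcm_dvd n hn, not_not]

theorem lcm_smallest_period (n : ℕ) (hn : 2 ≤ n) :
    IsPeriodNat {a : ℕ | ∃ b : ℕ, 1 < b ∧ b < 2 ^ n ∧ ¬ b ∣ a}
      ((Finset.Icc 1 (2 ^ n - 1)).lcm id) ∧
    (∀ k : ℕ, 1 ≤ k →
      IsPeriodNat {a : ℕ | ∃ b : ℕ, 1 < b ∧ b < 2 ^ n ∧ ¬ b ∣ a} k →
      (Finset.Icc 1 (2 ^ n - 1)).lcm id ∣ k) ∧
    IsLeast {k : ℕ | 1 ≤ k ∧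
        IsPeriodNat {a : ℕ | ∃ b : ℕ, 1 < b ∧ b < 2 ^ n ∧ ¬ b ∣ a} k}
      ((Finset.Icc 1 (2 ^ n - 1)).lcm id) := by
  set L := (Finset.Icc 1 (2 ^ n - 1)).lcm id with hLdef
  have hLpos : 0 < L := by
    rw [hLdef]
    apply Nat.pos_of_ne_zero
    intro h0
    rw [Finset.lcm_eq_zero_iff] at h0
    obtain ⟨b, hb, hb0⟩ := h0
    rw [Finset.mem_Icc] at hb
    simp only [id_eq] at hb0
    omega
  have hperiod : IsPeriodNat {a : ℕ | ∃ b : ℕ, 1 < b ∧ b < 2 ^ n ∧ ¬ b ∣ a} L := by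
    refine ⟨0, fun a _ => ?_⟩
    simp only [Set.mem_setOf_eq, mem_iff_not_lcm_dvd n hn, ← hLdef]
    exact not_congr Nat.dvd_add_self_right
  have hmin : ∀ k : ℕ, 1 ≤ k →
      IsPeriodNat {a : ℕ | ∃ b : ℕ, 1 < b ∧ b < 2 ^ n ∧ ¬ b ∣ a} k → L ∣ k := by
    rintro k hk ⟨n₀, hn₀⟩
    set a := L * (n₀ + 1) with ha
    have haL : L ∣ a := Dvd.intro _ rfl
    have han₀ : n₀ ≤ a := by
      calc n₀ ≤ n₀ + 1 := Nat.le_succ _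
      _ = 1 * (n₀ + 1) := (one_mul _).symm
      _ ≤ L * (n₀ + 1) := Nat.mul_le_mul_right _ hLpos
    have hnotmem : a ∉ {a : ℕ | ∃ b : ℕ, 1 < b ∧ b < 2 ^ n ∧ ¬ b ∣ a} :=
      (lcm_dvd_iff_not_mem n hn a).mp haL
    have : a + k ∉ {a : ℕ | ∃ b : ℕ, 1 < b ∧ b < 2 ^ n ∧ ¬ b ∣ a} := by
      intro hmem
      exact hnotmem ((hn₀ a han₀).mp hmem)
    have hdvd : L ∣ a + k := (lcm_dvd_iff_not_mem n hn (a + k)).mpr this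
    exact (Nat.dvd_add_right haL).mp hdvd
  refine ⟨hperiod, hmin, ⟨hLpos, hperiod⟩, ?_⟩
  rintro k ⟨hk1, hkp⟩
  exact Nat.le_of_dvd hk1 (hmin k hk1 hkp)
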